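/- Let S be a numerical semigroup with embedding dimension e(S) = m(S) − 2, where m(S) is the multiplicity. Then every element of Ap(S) has elasticity 1 or 3/2; that is, R(Ap(S)) ⊆ {1, 3/2}. -/

import Mathlib

/-- A numerical semigroup: a cofinite additive submonoid of ℕ. -/
def IsNumericalSemigroup (S : Set ℕ) : Prop :=
  0 ∈ S ∧ (∀ a ∈ S, ∀ b ∈ S, a + b ∈ S) ∧ (Sᶜ : Set ℕ).Finite

/-- The multiplicity: the smallest nonzero element. -/
noncomputable def mult (S : Set ℕ) : ℕ := sInf {n | n ∈ S ∧ n ≠ 0}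

/-- The Apéry set of `S` with respect to `m`: elements `x ∈ S` with `x - m ∉ S`. -/
def Apery (S : Set ℕ) (m : ℕ) : Set ℕ :=
  {x | x ∈ S ∧ ¬∃ y ∈ S, x = y + m}

/-- The atoms of `S`: nonzero elements not a sum of two nonzero elements of `S`. -/
def Atoms (S : Set ℕ) : Set ℕ :=
  {x | x ∈ S ∧ x ≠ 0 ∧ ¬∃ a ∈ S, ∃ b ∈ S, a ≠ 0 ∧ b ≠ 0 ∧ x = a + b}

/-- The set of factorization lengths of `n` over the atom set `A`. -/
def FactLens (A : Set ℕ) (n : ℕ) : Set ℕ :=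
  {L | ∃ c : ℕ →₀ ℕ, (↑c.support : Set ℕ) ⊆ A ∧
    c.sum (fun x k => k * x) = n ∧ c.sum (fun _ k => k) = L}

/-- `n` is half-factorial: all factorization lengths agree. -/
def HalfFactorial (A : Set ℕ) (n : ℕ) : Prop :=
  ∀ L₁ ∈ FactLens A n, ∀ L₂ ∈ FactLens A n, L₁ = L₂

/-- Elasticity: max factorization length over min, with `ρ(0) = 1`. -/
noncomputable def elasticity (A : Set ℕ) (n : ℕ) : ℚ :=
  if n = 0 then 1 else ((sSup (FactLens A n) : ℕ) : ℚ) / ((sInf (FactLens A n) : ℕ) : ℚ)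

namespace NSP

lemma sum_toMultiset (f : ℕ →₀ ℕ) : (Finsupp.toMultiset f).sum = f.sum fun a n => n * a := by
  induction f using Finsupp.induction with
  | zero => simp
  | single_add a n f ha hn ih =>
    rw [Finsupp.toMultiset_add, Multiset.sum_add, ih, Finsupp.toMultiset_single,
      Finsupp.sum_add_index (by simp) (by intros; ring)]
    simp [Multiset.sum_nsmul, mul_comm]

lemma factLens_iff {A : Set ℕ} {n L : ℕ} :
    L ∈ FactLens A n ↔
      ∃ s : Multiset ℕ, (∀ a ∈ s, a ∈ A) ∧ s.sum = n ∧ Multiset.card s = L := by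
  classical
  constructor
  · rintro ⟨c, hsupp, hsum, hlen⟩
    refine ⟨Finsupp.toMultiset c, ?_, ?_, ?_⟩
    · intro a ha
      exact hsupp ((Finsupp.mem_toMultiset c a).1 ha)
    · rw [sum_toMultiset]; exact hsum
    · rw [Finsupp.card_toMultiset]; exact hlen
  · rintro ⟨s, hA, hsum, hcard⟩
    refine ⟨s.toFinsupp, ?_, ?_, ?_⟩
    · intro a ha
      simp only [Finset.mem_coe, Multiset.toFinsupp_support, Multiset.mem_toFinset] at ha
      exact hA a ha
    · have h := sum_toMultiset s.toFinsupp
      rw [Multiset.toFinsupp_toMultiset] at h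
      exact h.symm.trans hsum
    · have h := Finsupp.card_toMultiset s.toFinsupp
      rw [Multiset.toFinsupp_toMultiset] at h
      exact h.symm.trans hcard

variable {S : Set ℕ}

lemma sum_mem (hS : IsNumericalSemigroup S) (s : Multiset ℕ) (h : ∀ a ∈ s, a ∈ S) :
    s.sum ∈ S := by
  induction s using Multiset.induction with
  | empty => simpa using hS.1
  | cons a t ih =>
    rw [Multiset.sum_cons]
    exact hS.2.1 a (h a (Multiset.mem_cons_self a t)) t.sum
      (ih fun b hb => h b (Multiset.mem_cons_of_mem hb))

lemma mult_spec (hS : IsNumericalSemigroup S) : mult S ∈ S ∧ mult S ≠ 0 := by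
  have hinf : S.Infinite := by
    have := hS.2.2.infinite_compl; rwa [compl_compl] at this
  have hne : {n | n ∈ S ∧ n ≠ 0}.Nonempty := by
    obtain ⟨x, hx⟩ := (hinf.diff (Set.finite_singleton 0)).nonempty
    exact ⟨x, hx.1, by simpa using hx.2⟩
  exact Nat.sInf_mem hne

lemma mult_le (hS : IsNumericalSemigroup S) {s : ℕ} (hs : s ∈ S) (h0 : s ≠ 0) :
    mult S ≤ s := Nat.sInf_le ⟨hs, h0⟩

lemma exists_factorization (hS : IsNumericalSemigroup S) :
    ∀ x ∈ S, ∃ s : Multiset ℕ, (∀ a ∈ s, a ∈ Atoms S) ∧ s.sum = x := by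
  intro x
  induction x using Nat.strong_induction_on with
  | _ x ih =>
    intro hx
    rcases eq_or_ne x 0 with rfl | hx0
    · exact ⟨0, by simp⟩
    by_cases hat : x ∈ Atoms S
    · exact ⟨{x}, by simpa using hat, by simp⟩
    · have hdec : ∃ a ∈ S, ∃ b ∈ S, a ≠ 0 ∧ b ≠ 0 ∧ x = a + b := by
        by_contra hc; exact hat ⟨hx, hx0, hc⟩
      obtain ⟨a, ha, b, hb, ha0, hb0, rfl⟩ := hdec
      obtain ⟨sa, hsa, hsaSum⟩ := ih a (by omega) ha
      obtain ⟨sb, hsb, hsbSum⟩ := ih b (by omega) hb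
      refine ⟨sa + sb, fun c hc => ?_, by simp [hsaSum, hsbSum]⟩
      rcases Multiset.mem_add.1 hc with h | h
      exacts [hsa c h, hsb c h]


lemma add_mul_mult_mem (hS : IsNumericalSemigroup S) {s : ℕ} (hs : s ∈ S) (k : ℕ) :
    s + k * mult S ∈ S := by
  induction k with
  | zero => simpa using hs
  | succ k ih =>
    have : s + (k + 1) * mult S = (s + k * mult S) + mult S := by ring
    rw [this]
    exact hS.2.1 _ ih _ (mult_spec hS).1

lemma apery_mod_injOn (hS : IsNumericalSemigroup S) :
    Set.InjOn (· % mult S) (Apery S (mult S)) := by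
  have key : ∀ x ∈ Apery S (mult S), ∀ y ∈ Apery S (mult S),
      x % mult S = y % mult S → x ≤ y → x = y := by
    intro x hx y hy hmod hxy
    have hdvd : mult S ∣ y - x := (Nat.modEq_iff_dvd' hxy).1 hmod
    obtain ⟨t, ht⟩ := hdvd
    match t with
    | 0 => omega
    | (t' + 1) =>
      exfalso
      have hy' : y = (x + t' * mult S) + mult S := by
        have h1 : y - x = mult S * (t' + 1) := ht
        have h2 : mult S * (t' + 1) = t' * mult S + mult S := by ring
        omega
      exact hy.2 ⟨x + t' * mult S, add_mul_mult_mem hS hx.1 t', hy'⟩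
  intro x hx y hy hmod
  rcases le_total x y with h | h
  · exact key x hx y hy hmod h
  · exact (key y hy x hx hmod.symm h).symm

lemma apery_mod_surj (hS : IsNumericalSemigroup S) :
    ∀ r < mult S, ∃ w ∈ Apery S (mult S), w % mult S = r := by
  intro r hr
  have hm0 : mult S ≠ 0 := (mult_spec hS).2
  set T : Set ℕ := {s | s ∈ S ∧ s % mult S = r} with hT
  have hTne : T.Nonempty := by
    by_contra hc
    rw [Set.not_nonempty_iff_eq_empty] at hc
    have hsub : {n : ℕ | n % mult S = r} ⊆ Sᶜ := by
      intro n hn hnS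
      have : n ∈ T := ⟨hnS, hn⟩
      rw [hc] at this; exact this
    have hinf : {n : ℕ | n % mult S = r}.Infinite := by
      apply Set.infinite_of_injective_forall_mem
        (f := fun k : ℕ => r + k * mult S) ?_ ?_
      · intro a b hab
        simp only at hab
        have := Nat.pos_of_ne_zero hm0
        exact Nat.eq_of_mul_eq_mul_right this (by omega)
      · intro k
        simp only [Set.mem_setOf_eq, Nat.add_mul_mod_self_right]
        exact Nat.mod_eq_of_lt hr
    exact hinf (hS.2.2.subset hsub)
  set w := sInf T with hw
  have hwT : w ∈ T := Nat.sInf_mem hTne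
  refine ⟨w, ⟨hwT.1, ?_⟩, hwT.2⟩
  rintro ⟨y, hyS, hy⟩
  have hyT : y ∈ T := ⟨hyS, by rw [← hwT.2, hy, Nat.add_mod_right]⟩
  have := Nat.sInf_le hyT
  omega

lemma apery_image (hS : IsNumericalSemigroup S) :
    (· % mult S) '' (Apery S (mult S)) = Set.Iio (mult S) := by
  apply Set.eq_of_subset_of_subset
  · rintro x ⟨y, _, rfl⟩
    exact Nat.mod_lt y (Nat.pos_of_ne_zero (mult_spec hS).2)
  · intro r hr
    obtain ⟨w, hw, hwr⟩ := apery_mod_surj hS r hr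
    exact ⟨w, hw, hwr⟩

lemma apery_finite (hS : IsNumericalSemigroup S) : (Apery S (mult S)).Finite := by
  apply Set.Finite.of_finite_image _ (apery_mod_injOn hS)
  rw [apery_image hS]
  exact Set.finite_Iio _

lemma apery_ncard (hS : IsNumericalSemigroup S) :
    (Apery S (mult S)).ncard = mult S := by
  have h1 := Set.ncard_image_of_injOn (apery_mod_injOn hS)
  rw [apery_image hS] at h1
  rw [← h1]
  have : (Set.Iio (mult S)) = ↑(Finset.range (mult S)) := by
    ext x; simp
  rw [this, Set.ncard_coe_finset, Finset.card_range]

lemma mult_atom (hS : IsNumericalSemigroup S) : mult S ∈ Atoms S := by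
  refine ⟨(mult_spec hS).1, (mult_spec hS).2, ?_⟩
  rintro ⟨a, ha, b, hb, ha0, hb0, heq⟩
  have h1 := mult_le hS ha ha0
  have h2 := mult_le hS hb hb0
  omega

lemma atoms_subset (hS : IsNumericalSemigroup S) :
    Atoms S ⊆ Apery S (mult S) ∪ {mult S} := by
  intro a ha
  by_cases hA : a ∈ Apery S (mult S)
  · exact Or.inl hA
  · right
    have : ∃ y ∈ S, a = y + mult S := by
      by_contra hc; exact hA ⟨ha.1, hc⟩
    obtain ⟨y, hyS, hy⟩ := this
    rcases eq_or_ne y 0 with rfl | hy0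
    · simpa using hy
    · exact absurd ⟨y, hyS, mult S, (mult_spec hS).1, hy0, (mult_spec hS).2, hy⟩ ha.2.2

lemma zero_mem_apery (hS : IsNumericalSemigroup S) : 0 ∈ Apery S (mult S) := by
  refine ⟨hS.1, ?_⟩
  rintro ⟨y, _, hy⟩
  have := (mult_spec hS).2
  omega

lemma mult_not_mem_apery (hS : IsNumericalSemigroup S) :
    mult S ∉ Apery S (mult S) := by
  rintro ⟨-, h⟩
  exact h ⟨0, hS.1, by omega⟩


def NA (S : Set ℕ) : Set ℕ := {x | x ∈ Apery S (mult S) ∧ x ≠ 0 ∧ x ∉ Atoms S}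

lemma atoms_finite (hS : IsNumericalSemigroup S) : (Atoms S).Finite :=
  ((apery_finite hS).union (Set.finite_singleton _)).subset (atoms_subset hS)

lemma NA_finite (hS : IsNumericalSemigroup S) : (NA S).Finite :=
  (apery_finite hS).subset fun x hx => hx.1

lemma NA_ncard_le (hS : IsNumericalSemigroup S) (h : (Atoms S).ncard = mult S - 2)
    (hm : 3 ≤ mult S) : (NA S).ncard ≤ 2 := by
  have hfin := apery_finite hS
  have hAfin := atoms_finite hS
  have hA'fin : ((Atoms S) \ {mult S}).Finite := hAfin.diff
  have hNfin := NA_finite hS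
  have hsub : {0} ∪ ((Atoms S) \ {mult S}) ∪ NA S ⊆ Apery S (mult S) := by
    rintro x ((rfl | hx) | hx)
    · exact zero_mem_apery hS
    · rcases atoms_subset hS hx.1 with h' | h'
      · exact h'
      · exact absurd h' hx.2
    · exact hx.1
  have hd1 : Disjoint ({0} : Set ℕ) ((Atoms S) \ {mult S}) := by
    rw [Set.disjoint_singleton_left]
    rintro ⟨hx, -⟩
    exact hx.2.1 rfl
  have hd2 : Disjoint ({0} ∪ ((Atoms S) \ {mult S})) (NA S) := by
    rw [Set.disjoint_union_left]
    constructor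
    · rw [Set.disjoint_singleton_left]
      rintro ⟨-, h0, -⟩
      exact h0 rfl
    · rw [Set.disjoint_left]
      rintro x ⟨hx, -⟩ ⟨-, -, hx'⟩
      exact hx' hx
  have hc1 : (({0} : Set ℕ) ∪ ((Atoms S) \ {mult S}) ∪ NA S).ncard
      = 1 + ((Atoms S) \ {mult S}).ncard + (NA S).ncard := by
    rw [Set.ncard_union_eq hd2 ((Set.finite_singleton _).union hA'fin) hNfin,
      Set.ncard_union_eq hd1 (Set.finite_singleton _) hA'fin, Set.ncard_singleton]
  have hc2 : ((Atoms S) \ {mult S}).ncard = mult S - 3 := by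
    rw [Set.ncard_diff_singleton_of_mem (mult_atom hS), h]
    omega
  have hle := Set.ncard_le_ncard hsub hfin
  rw [hc1, hc2, apery_ncard hS] at hle
  omega

lemma subsum_mem (hS : IsNumericalSemigroup S) {x : ℕ} (hx : x ∈ Apery S (mult S))
    {s : Multiset ℕ} (hs : ∀ a ∈ s, a ∈ Atoms S) (hsum : s.sum = x)
    {u : Multiset ℕ} (hu : u ≤ s) (hcard : 2 ≤ Multiset.card u) :
    u.sum ∈ NA S := by
  have huA : ∀ a ∈ u, a ∈ Atoms S := fun a ha => hs a (Multiset.mem_of_le hu ha)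
  have huS : ∀ a ∈ u, a ∈ S := fun a ha => (huA a ha).1
  obtain ⟨a, ha⟩ := Multiset.card_pos_iff_exists_mem.1 (show 0 < Multiset.card u by omega)
  obtain ⟨v, rfl⟩ := Multiset.exists_cons_of_mem ha
  obtain ⟨b, hb⟩ := Multiset.card_pos_iff_exists_mem.1
    (show 0 < Multiset.card v by simp at hcard; omega)
  obtain ⟨w, rfl⟩ := Multiset.exists_cons_of_mem hb
  have haAtom := huA a (Multiset.mem_cons_self _ _)
  have hbAtom := huA b (Multiset.mem_cons_of_mem (Multiset.mem_cons_self _ _))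
  have hvS : (b ::ₘ w).sum ∈ S :=
    sum_mem hS _ fun c hc => huS c (Multiset.mem_cons_of_mem hc)
  have hv0 : (b ::ₘ w).sum ≠ 0 := by
    rw [Multiset.sum_cons]
    have := hbAtom.2.1
    omega
  have husum : (a ::ₘ b ::ₘ w).sum = a + (b ::ₘ w).sum := Multiset.sum_cons a _
  refine ⟨⟨sum_mem hS _ huS, ?_⟩, ?_, ?_⟩
  · rintro ⟨y, hyS, hy⟩
    have hsplit : (s - (a ::ₘ b ::ₘ w)) + (a ::ₘ b ::ₘ w) = s := tsub_add_cancel_of_le hu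
    have hrestS : (s - (a ::ₘ b ::ₘ w)).sum ∈ S :=
      sum_mem hS _ fun c hc => (hs c (Multiset.mem_of_le (tsub_le_self) hc)).1
    have key : (s - (a ::ₘ b ::ₘ w)).sum + (a ::ₘ b ::ₘ w).sum = x := by
      rw [← Multiset.sum_add, hsplit, hsum]
    have hxeq : x = (y + (s - (a ::ₘ b ::ₘ w)).sum) + mult S := by omega
    exact hx.2 ⟨y + (s - (a ::ₘ b ::ₘ w)).sum, hS.2.1 _ hyS _ hrestS, hxeq⟩
  · rw [husum]
    have := haAtom.2.1
    omega
  · intro hat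
    exact hat.2.2 ⟨a, haAtom.1, (b ::ₘ w).sum, hvS, haAtom.2.1, hv0, husum⟩

lemma card_le_three (hS : IsNumericalSemigroup S) (hN2 : (NA S).ncard ≤ 2)
    {x : ℕ} (hx : x ∈ Apery S (mult S)) {s : Multiset ℕ}
    (hs : ∀ a ∈ s, a ∈ Atoms S) (hsum : s.sum = x) :
    Multiset.card s ≤ 3 := by
  by_contra hcon
  push_neg at hcon
  obtain ⟨m1, hm1⟩ := Multiset.card_pos_iff_exists_mem.1 (show 0 < Multiset.card s by omega)
  obtain ⟨s1, rfl⟩ := Multiset.exists_cons_of_mem hm1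
  obtain ⟨m2, hm2⟩ := Multiset.card_pos_iff_exists_mem.1
    (show 0 < Multiset.card s1 by simp at hcon; omega)
  obtain ⟨s2, rfl⟩ := Multiset.exists_cons_of_mem hm2
  obtain ⟨m3, hm3⟩ := Multiset.card_pos_iff_exists_mem.1
    (show 0 < Multiset.card s2 by simp at hcon; omega)
  obtain ⟨s3, rfl⟩ := Multiset.exists_cons_of_mem hm3
  obtain ⟨m4, hm4⟩ := Multiset.card_pos_iff_exists_mem.1
    (show 0 < Multiset.card s3 by simp at hcon; omega)
  obtain ⟨t, rfl⟩ := Multiset.exists_cons_of_mem hm4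
  set a1 := m1; set a2 := m2; set a3 := m3; set a4 := m4
  have ha1 : a1 ∈ Atoms S := hs a1 (by simp)
  have ha2 : a2 ∈ Atoms S := hs a2 (by simp)
  have ha3 : a3 ∈ Atoms S := hs a3 (by simp)
  have ha4 : a4 ∈ Atoms S := hs a4 (by simp)
  have h10 := ha1.2.1
  have h20 := ha2.2.1
  have h30 := ha3.2.1
  have h40 := ha4.2.1
  -- sub-multiset facts
  have h12 : a1 + a2 ∈ NA S := by
    have := subsum_mem hS hx hs hsum
      (u := a1 ::ₘ a2 ::ₘ 0)
      (Multiset.cons_le_cons a1 (Multiset.cons_le_cons a2 (Multiset.zero_le _))) (by simp)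
    simpa using this
  have h13 : a1 + a3 ∈ NA S := by
    have := subsum_mem hS hx hs hsum
      (u := a1 ::ₘ a3 ::ₘ 0)
      (Multiset.cons_le_cons a1 ((Multiset.cons_le_cons a3 (Multiset.zero_le _)).trans
        (Multiset.le_cons_self _ a2))) (by simp)
    simpa using this
  have h23 : a2 + a3 ∈ NA S := by
    have := subsum_mem hS hx hs hsum
      (u := a2 ::ₘ a3 ::ₘ 0)
      ((Multiset.cons_le_cons a2 (Multiset.cons_le_cons a3 (Multiset.zero_le _))).trans
        (Multiset.le_cons_self _ a1)) (by simp)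
    simpa using this
  have h123 : a1 + a2 + a3 ∈ NA S := by
    have := subsum_mem hS hx hs hsum
      (u := a1 ::ₘ a2 ::ₘ a3 ::ₘ 0)
      (Multiset.cons_le_cons a1 (Multiset.cons_le_cons a2 (Multiset.cons_le_cons a3 (Multiset.zero_le _)))) (by simp)
    simpa [add_assoc] using this
  have h14 : a1 + a4 ∈ NA S := by
    have := subsum_mem hS hx hs hsum
      (u := a1 ::ₘ a4 ::ₘ 0)
      (Multiset.cons_le_cons a1 ((Multiset.cons_le_cons a4 (Multiset.zero_le _)).trans
        ((Multiset.le_cons_self _ a3).trans (Multiset.le_cons_self _ a2)))) (by simp)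
    simpa using this
  have h1234 : a1 + a2 + a3 + a4 ∈ NA S := by
    have := subsum_mem hS hx hs hsum
      (u := a1 ::ₘ a2 ::ₘ a3 ::ₘ a4 ::ₘ 0)
      (Multiset.cons_le_cons a1 (Multiset.cons_le_cons a2 (Multiset.cons_le_cons a3 (Multiset.cons_le_cons a4 (Multiset.zero_le _))))) (by simp)
    simpa [add_assoc] using this
  have hNfin := NA_finite hS
  -- step 1: a1 = a2 = a3
  have hdfin : (NA S \ {a1 + a2 + a3}).Finite := hNfin.diff
  have hd1 : (NA S \ {a1 + a2 + a3}).ncard ≤ 1 := by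
    have := Set.ncard_diff_singleton_of_mem h123
    omega
  have heq1 := (Set.ncard_le_one hdfin).1 hd1
  have e12 : a1 + a2 = a1 + a3 :=
    heq1 (a1 + a2) ⟨h12, by simp; omega⟩ (a1 + a3) ⟨h13, by simp; omega⟩
  have e13 : a1 + a2 = a2 + a3 :=
    heq1 (a1 + a2) ⟨h12, by simp; omega⟩ (a2 + a3) ⟨h23, by simp; omega⟩
  have ea2 : a2 = a3 := by omega
  have ea1 : a1 = a3 := by omega
  -- step 2: NA S = {2*a3, 3*a3}
  have hpair : ({2 * a3, 3 * a3} : Set ℕ) ⊆ NA S := by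
    rintro z (rfl | rfl)
    · have : 2 * a3 = a1 + a2 := by omega
      rw [this]; exact h12
    · have : 3 * a3 = a1 + a2 + a3 := by omega
      rw [this]; exact h123
  have hpcard : ({2 * a3, 3 * a3} : Set ℕ).ncard = 2 :=
    Set.ncard_pair (by omega)
  have hNeq : ({2 * a3, 3 * a3} : Set ℕ) = NA S :=
    Set.eq_of_subset_of_ncard_le hpair (by omega) hNfin
  -- step 3: contradiction via a4
  have h14' : a1 + a4 ∈ ({2 * a3, 3 * a3} : Set ℕ) := by rw [hNeq]; exact h14
  simp only [Set.mem_insert_iff, Set.mem_singleton_iff] at h14'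
  rcases h14' with h' | h'
  · -- a4 = a3
    have hea4 : a4 = a3 := by omega
    have h4' : a1 + a2 + a3 + a4 ∈ ({2 * a3, 3 * a3} : Set ℕ) := by
      rw [hNeq]; exact h1234
    simp only [Set.mem_insert_iff, Set.mem_singleton_iff] at h4'
    omega
  · -- a4 = 2 * a3
    exact ha4.2.2 ⟨a3, ha3.1, a3, ha3.1, h30, h30, by omega⟩


lemma sum_not_atom (hS : IsNumericalSemigroup S) {s : Multiset ℕ}
    (hsA : ∀ a ∈ s, a ∈ Atoms S) (h2 : 2 ≤ Multiset.card s) :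
    s.sum ∉ Atoms S := by
  obtain ⟨a, ha⟩ := Multiset.card_pos_iff_exists_mem.1 (show 0 < Multiset.card s by omega)
  obtain ⟨v, rfl⟩ := Multiset.exists_cons_of_mem ha
  obtain ⟨b, hb⟩ := Multiset.card_pos_iff_exists_mem.1
    (show 0 < Multiset.card v by simp at h2; omega)
  have haAtom := hsA a (Multiset.mem_cons_self _ _)
  have hbAtom := hsA b (Multiset.mem_cons_of_mem hb)
  have hvS : v.sum ∈ S := sum_mem hS _ fun c hc => (hsA c (Multiset.mem_cons_of_mem hc)).1
  have hv0 : v.sum ≠ 0 := by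
    obtain ⟨w, rfl⟩ := Multiset.exists_cons_of_mem hb
    rw [Multiset.sum_cons]
    have := hbAtom.2.1
    omega
  intro hat
  exact hat.2.2 ⟨a, haAtom.1, v.sum, hvS, haAtom.2.1, hv0, Multiset.sum_cons a v⟩

lemma factLens_atom (hS : IsNumericalSemigroup S) {x : ℕ} (hx : x ∈ Atoms S) :
    FactLens (Atoms S) x = {1} := by
  ext L
  simp only [Set.mem_singleton_iff]
  constructor
  · rw [factLens_iff]
    rintro ⟨s, hsA, hsum, hcard⟩
    by_contra hL
    rcases Nat.lt_or_ge L 1 with hlt | hge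
    · have hL0 : L = 0 := by omega
      rw [hL0, Multiset.card_eq_zero] at hcard
      rw [hcard] at hsum
      exact hx.2.1 (by simpa using hsum.symm)
    · have h2 : 2 ≤ Multiset.card s := by omega
      exact sum_not_atom hS hsA h2 (hsum ▸ hx)
  · rintro rfl
    rw [factLens_iff]
    exact ⟨{x}, by simpa using hx, by simp, by simp⟩

lemma elasticity_atom (hS : IsNumericalSemigroup S) {x : ℕ} (hx : x ∈ Atoms S) :
    elasticity (Atoms S) x = 1 := by
  rw [elasticity, if_neg hx.2.1, factLens_atom hS hx]
  simp

theorem elasticity_embdim_mult_sub_two' (S : Set ℕ) (hS : IsNumericalSemigroup S)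
    (h : (Atoms S).ncard = mult S - 2) (hm : 3 ≤ mult S) :
    ∀ n ∈ Apery S (mult S),
      elasticity (Atoms S) n = 1 ∨ elasticity (Atoms S) n = 3 / 2 := by
  intro n hn
  rcases eq_or_ne n 0 with rfl | hn0
  · left; rw [elasticity, if_pos rfl]
  by_cases hat : n ∈ Atoms S
  · left; exact elasticity_atom hS hat
  · have hN2 := NA_ncard_le hS h hm
    have hsub : FactLens (Atoms S) n ⊆ {2, 3} := by
      intro L hL
      rw [factLens_iff] at hL
      obtain ⟨s, hsA, hsum, hcard⟩ := hL
      have h3 := card_le_three hS hN2 hn hsA hsum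
      have hL0 : L ≠ 0 := by
        rintro rfl
        rw [Multiset.card_eq_zero] at hcard
        rw [hcard] at hsum
        exact hn0 (by simpa using hsum.symm)
      have hL1 : L ≠ 1 := by
        rintro rfl
        rw [Multiset.card_eq_one] at hcard
        obtain ⟨a, rfl⟩ := hcard
        simp only [Multiset.sum_singleton] at hsum
        exact hat (hsum ▸ hsA a (by simp))
      simp only [Set.mem_insert_iff, Set.mem_singleton_iff]
      omega
    have hne : (FactLens (Atoms S) n).Nonempty := by
      obtain ⟨s, hsA, hsum⟩ := exists_factorization hS n hn.1
      exact ⟨Multiset.card s, factLens_iff.2 ⟨s, hsA, hsum, rfl⟩⟩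
    have hbdd : BddAbove (FactLens (Atoms S) n) := by
      refine ⟨3, fun L hL => ?_⟩
      rcases hsub hL with h' | h' <;> simp_all
    have hSupMem := Nat.sSup_mem hne hbdd
    have hInfMem := Nat.sInf_mem hne
    have hle : sInf (FactLens (Atoms S) n) ≤ sSup (FactLens (Atoms S) n) :=
      Nat.sInf_le hSupMem
    have hS' := hsub hSupMem
    have hI' := hsub hInfMem
    simp only [Set.mem_insert_iff, Set.mem_singleton_iff] at hS' hI'
    rw [elasticity, if_neg hn0]
    rcases hI' with hI2 | hI3 <;> rcases hS' with hS2 | hS3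
    · left; rw [hI2, hS2]; norm_num
    · right; rw [hI2, hS3]; norm_num
    · omega
    · left; rw [hI3, hS3]; norm_num

end NSP

theorem elasticity_embdim_mult_sub_two (S : Set ℕ) (hS : IsNumericalSemigroup S)
    (h : (Atoms S).ncard = mult S - 2) (hm : 3 ≤ mult S) :
    ∀ n ∈ Apery S (mult S),
      elasticity (Atoms S) n = 1 ∨ elasticity (Atoms S) n = 3 / 2 :=
  NSP.elasticity_embdim_mult_sub_two' S hS h hm
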